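/- Let ρ be a symmetric nondegenerate probability measure on ℝ, and let I be the Cramér transform of the law of (Z, Z²) with Z ~ ρ. Then for all (x, y) with x² ≤ y and (x,y) ≠ (0,0), and all ε with 0 ≤ ε < |x|, one has I(x, y) − x²/(2y) ≥ I(ε, y) − ε²/(2y). -/

import Mathlib

open MeasureTheory ENNReal

/-- The log-Laplace transform of the law of `(Z, Z^2)` for `Z ~ ρ`, as a function into `ℝ≥0∞`
before taking logarithms. -/
noncomputable def lapCW (ρ : Measure ℝ) (u v : ℝ) : ℝ≥0∞ :=
  ∫⁻ z, ENNReal.ofReal (Real.exp (u * z + v * z ^ 2)) ∂ρ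

/-- The Cramér transform `I` of the law of `(Z, Z^2)` for `Z ~ ρ`, with values in `EReal`. -/
noncomputable def cramCW (ρ : Measure ℝ) (x y : ℝ) : EReal :=
  ⨆ p : ℝ × ℝ, (((x * p.1 + y * p.2 : ℝ) : EReal) - ENNReal.log (lapCW ρ p.1 p.2))
lemma sinh_le_mul_cosh {s : ℝ} (hs : 0 ≤ s) : Real.sinh s ≤ s * Real.cosh s := by
  have h : MonotoneOn (fun t : ℝ => t * Real.cosh t - Real.sinh t) (Set.Ici 0) := by
    apply monotoneOn_of_deriv_nonneg (convex_Ici 0)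
    · fun_prop
    · fun_prop
    · intro t ht
      simp only [interior_Ici, Set.mem_Ioi] at ht
      have h1 : HasDerivAt (fun t : ℝ => t * Real.cosh t - Real.sinh t)
          (1 * Real.cosh t + t * Real.sinh t - Real.cosh t) t :=
        ((hasDerivAt_id t).mul (Real.hasDerivAt_cosh t)).sub (Real.hasDerivAt_sinh t)
      rw [h1.deriv]
      nlinarith [Real.sinh_nonneg_iff.2 ht.le]
  have := h (Set.self_mem_Ici) (Set.mem_Ici.2 hs) hs
  simpa using this

lemma cosh_mul_exp_anti {p q m : ℝ} (h0 : 0 ≤ p) (hpq : p ≤ q) :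
    Real.cosh q * Real.exp (m - q ^ 2 / 2) ≤ Real.cosh p * Real.exp (m - p ^ 2 / 2) := by
  have key : AntitoneOn (fun t : ℝ => Real.cosh t * Real.exp (-(t ^ 2) / 2)) (Set.Ici 0) := by
    apply antitoneOn_of_deriv_nonpos (convex_Ici 0)
    · fun_prop
    · fun_prop
    · intro t ht
      simp only [interior_Ici, Set.mem_Ioi] at ht
      have h2 : HasDerivAt (fun t : ℝ => Real.exp (-(t ^ 2) / 2))
          (-(2 * t ^ 1) / 2 * Real.exp (-(t ^ 2) / 2)) t := by
        have h3 : HasDerivAt (fun t : ℝ => -(t ^ 2) / 2) (-(2 * t ^ 1) / 2) t :=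
          ((hasDerivAt_pow 2 t).neg).div_const 2
        have := (Real.hasDerivAt_exp (-(t ^ 2) / 2)).comp t h3
        simpa [mul_comm, Function.comp_def] using this
      have h1 : HasDerivAt (fun t : ℝ => Real.cosh t * Real.exp (-(t ^ 2) / 2))
          (Real.sinh t * Real.exp (-(t ^ 2) / 2)
            + Real.cosh t * (-(2 * t ^ 1) / 2 * Real.exp (-(t ^ 2) / 2))) t :=
        (Real.hasDerivAt_cosh t).mul h2
      rw [h1.deriv]
      have hs := sinh_le_mul_cosh ht.le
      have he := Real.exp_pos (-(t ^ 2) / 2)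
      nlinarith
  have := key (Set.mem_Ici.2 h0) (Set.mem_Ici.2 (h0.trans hpq)) hpq
  simp only at this
  have e1 : Real.exp (m - q ^ 2 / 2) = Real.exp m * Real.exp (-(q ^ 2) / 2) := by
    rw [← Real.exp_add]; ring_nf
  have e2 : Real.exp (m - p ^ 2 / 2) = Real.exp m * Real.exp (-(p ^ 2) / 2) := by
    rw [← Real.exp_add]; ring_nf
  rw [e1, e2]
  nlinarith [Real.exp_pos m]

lemma lapCW_meas (u v : ℝ) :
    Measurable fun z : ℝ => ENNReal.ofReal (Real.exp (u * z + v * z ^ 2)) := by fun_prop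

lemma lapCW_neg (ρ : Measure ℝ) (hsym : ρ.map (fun z => -z) = ρ) (u v : ℝ) :
    lapCW ρ (-u) v = lapCW ρ u v := by
  unfold lapCW
  nth_rewrite 2 [← hsym]
  rw [lintegral_map (lapCW_meas u v) (by fun_prop)]
  refine lintegral_congr fun z => ?_
  congr 2
  ring

lemma exp2cosh (t b : ℝ) : Real.exp (t + b) + Real.exp (-t + b) = 2 * Real.cosh t * Real.exp b := by
  rw [Real.cosh_eq, Real.exp_add, Real.exp_add]; ring

lemma algCW (X E y U v : ℝ) (hy : y ≠ 0) :
    X * (U + (X - E) / y) + y * (v + (U ^ 2 - (U + (X - E) / y) ^ 2) / 2)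
      = E * U + y * v + (X ^ 2 / (2 * y) - E ^ 2 / (2 * y)) := by
  field_simp
  ring

lemma ereal_step (r₁ r₂ a b : ℝ) (L L' : EReal) (hL : L' ≤ L) (hr : r₁ + (b - a) ≤ r₂) :
    (r₁ : EReal) - L ≤ ((r₂ : EReal) - L' - (b : EReal)) + (a : EReal) := by
  induction L' with
  | bot =>
      rw [EReal.coe_sub_bot, EReal.top_sub_coe, EReal.top_add_coe]
      exact le_top
  | coe ℓ =>
      have h1 : (r₁ : EReal) - L ≤ (r₁ : EReal) - (ℓ : EReal) := EReal.sub_le_sub le_rfl hL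
      refine h1.trans ?_
      norm_cast
      linarith
  | top =>
      rw [top_le_iff.mp hL, EReal.sub_top]
      exact bot_le

lemma lapCW_key (ρ : Measure ℝ) (hsym : ρ.map (fun z => -z) = ρ) (u v : ℝ) {d : ℝ}
    (hd : 0 ≤ d) :
    lapCW ρ (|u| + d) (v + (|u| ^ 2 - (|u| + d) ^ 2) / 2) ≤ lapCW ρ u v := by
  set u₀ := |u| with hu₀
  set u' := u₀ + d with hu'
  set v' := v + (u₀ ^ 2 - u' ^ 2) / 2 with hv'
  have hu₀0 : 0 ≤ u₀ := abs_nonneg u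
  have huu' : u₀ ≤ u' := by simp [hu']; linarith
  have hpt : ∀ z : ℝ,
      Real.exp (u' * z + v' * z ^ 2) + Real.exp (-u' * z + v' * z ^ 2)
        ≤ Real.exp (u₀ * z + v * z ^ 2) + Real.exp (-u₀ * z + v * z ^ 2) := by
    intro z
    have habs : |u₀ * z| ≤ |u' * z| := by
      rw [abs_mul, abs_mul]
      exact mul_le_mul_of_nonneg_right (by rw [abs_of_nonneg hu₀0, abs_of_nonneg (hu₀0.trans huu')]; exact huu') (abs_nonneg z)
    have key := cosh_mul_exp_anti (m := v * z ^ 2 + (u₀ * z) ^ 2 / 2) (abs_nonneg (u₀ * z)) habs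
    rw [Real.cosh_abs, Real.cosh_abs, sq_abs, sq_abs] at key
    have em1 : v * z ^ 2 + (u₀ * z) ^ 2 / 2 - (u' * z) ^ 2 / 2 = v' * z ^ 2 := by
      rw [hv']; ring
    have em2 : v * z ^ 2 + (u₀ * z) ^ 2 / 2 - (u₀ * z) ^ 2 / 2 = v * z ^ 2 := by ring
    rw [em1, em2] at key
    simp only [neg_mul]
    rw [exp2cosh (u' * z) (v' * z ^ 2), exp2cosh (u₀ * z) (v * z ^ 2)]
    linarith
  have hsum : lapCW ρ u' v' + lapCW ρ (-u') v' ≤ lapCW ρ u₀ v + lapCW ρ (-u₀) v := by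
    unfold lapCW
    rw [← lintegral_add_left (lapCW_meas u' v'), ← lintegral_add_left (lapCW_meas u₀ v)]
    refine lintegral_mono fun z => ?_
    rw [← ENNReal.ofReal_add (Real.exp_pos _).le (Real.exp_pos _).le,
        ← ENNReal.ofReal_add (Real.exp_pos _).le (Real.exp_pos _).le]
    exact ENNReal.ofReal_le_ofReal (hpt z)
  rw [lapCW_neg ρ hsym, lapCW_neg ρ hsym, ← two_mul, ← two_mul] at hsum
  have h2 : lapCW ρ u' v' ≤ lapCW ρ u₀ v :=
    (ENNReal.mul_le_mul_iff_right two_ne_zero ENNReal.ofNat_ne_top).mp hsum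
  refine h2.trans_eq ?_
  rcases abs_choice u with h | h
  · rw [hu₀, h]
  · rw [hu₀, h, lapCW_neg ρ hsym]

theorem cramCW_sub_F_ge (ρ : Measure ℝ) [IsProbabilityMeasure ρ]
    (hsym : ρ.map (fun z => -z) = ρ) (hnondeg : ∀ a : ℝ, ρ ≠ Measure.dirac a)
    (x y ε : ℝ) (hxy : x ^ 2 ≤ y) (hne : (x, y) ≠ (0, 0)) (hε0 : 0 ≤ ε) (hε : ε < |x|) :
    cramCW ρ ε y - ((ε ^ 2 / (2 * y) : ℝ) : EReal) ≤
      cramCW ρ x y - ((x ^ 2 / (2 * y) : ℝ) : EReal) := by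
  have hx : 0 < |x| := hε0.trans_lt hε
  have hx0 : x ≠ 0 := abs_pos.mp hx
  have hy : 0 < y := lt_of_lt_of_le (by positivity) hxy
  rw [EReal.sub_le_iff_le_add (Or.inl (EReal.coe_ne_bot _)) (Or.inl (EReal.coe_ne_top _))]
  unfold cramCW
  refine iSup_le fun p => ?_
  obtain ⟨u, v⟩ := p
  set d := (|x| - ε) / y with hd'
  have hd : 0 ≤ d := div_nonneg (by linarith) hy.le
  set u' := |u| + d with hu'
  set v' := v + (|u| ^ 2 - u' ^ 2) / 2 with hv'
  set u'' := if x < 0 then -u' else u' with hu''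
  have hlap : lapCW ρ u'' v' ≤ lapCW ρ u v := by
    rcases lt_or_ge x 0 with h | h
    · rw [hu'', if_pos h, lapCW_neg ρ hsym]
      exact lapCW_key ρ hsym u v hd
    · rw [hu'', if_neg (not_lt.mpr h)]
      exact lapCW_key ρ hsym u v hd
  have hxu : x * u'' = |x| * u' := by
    rcases lt_or_ge x 0 with h | h
    · rw [hu'', if_pos h, abs_of_neg h]; ring
    · rw [hu'', if_neg (not_lt.mpr h), abs_of_nonneg h]
  have halg : |x| * u' + y * v' = ε * |u| + y * v + (x ^ 2 / (2 * y) - ε ^ 2 / (2 * y)) := by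
    have hx2 : |x| ^ 2 = x ^ 2 := sq_abs x
    rw [hu', hv', hd', ← hx2]
    exact algCW |x| ε y |u| v hy.ne'
  have hr : ε * u + y * v + (x ^ 2 / (2 * y) - ε ^ 2 / (2 * y)) ≤ x * u'' + y * v' := by
    rw [hxu, halg]
    have : ε * u ≤ ε * |u| := mul_le_mul_of_nonneg_left (le_abs_self u) hε0
    linarith
  have hterm := ereal_step (ε * u + y * v) (x * u'' + y * v')
      (ε ^ 2 / (2 * y)) (x ^ 2 / (2 * y)) _ _ (ENNReal.log_monotone hlap) hr
  refine hterm.trans ?_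
  have hle : ((x * u'' + y * v' : ℝ) : EReal) - ENNReal.log (lapCW ρ u'' v') ≤
      ⨆ p : ℝ × ℝ, (((x * p.1 + y * p.2 : ℝ) : EReal) - ENNReal.log (lapCW ρ p.1 p.2)) :=
    le_iSup (fun p : ℝ × ℝ => ((x * p.1 + y * p.2 : ℝ) : EReal) - ENNReal.log (lapCW ρ p.1 p.2))
      (u'', v')
  exact add_le_add (EReal.sub_le_sub hle le_rfl) le_rfl
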